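/- In the braid group B_6, let γ = [1,1,2,1,3,4,3,4,3,5,4,3,5,2,4,1,3,1,2,1,3,4,5,4,3,5,4,3,5,5,5,4,3,2,1,3,4,5,4,4,5,4,3,2,4,3,4] (the braid word for o9_40504) and α' = [-4,-3,-2,-1,5,2,4,3,-5,-4,-3,5,4]. Then α'⁻¹·γ·α' = [(1,2,3,4,5)^8, 5,4,5,5,5,4,5]. -/

import Mathlib

/-- The Artin braid relations on `n` generators (so this presents the braid
group on `n + 1` strands); generator `i : Fin n` corresponds to `σ_{i+1}`. -/
def braidRels (n : ℕ) : Set (FreeGroup (Fin n)) :=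
  { r | (∃ i j : Fin n, (i : ℕ) + 1 = j ∧
          r = FreeGroup.of i * FreeGroup.of j * FreeGroup.of i *
              (FreeGroup.of j * FreeGroup.of i * FreeGroup.of j)⁻¹) ∨
        (∃ i j : Fin n, (i : ℕ) + 2 ≤ (j : ℕ) ∧
          r = FreeGroup.of i * FreeGroup.of j * (FreeGroup.of j * FreeGroup.of i)⁻¹) }

/-- The braid group on `n + 1` strands, with `n` Artin generators. -/
def BraidGroup (n : ℕ) : Type := PresentedGroup (braidRels n)

instance (n : ℕ) : Group (BraidGroup n) :=
  inferInstanceAs (Group (PresentedGroup (braidRels n)))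

/-- The Artin generator `σ_{i+1}` of the braid group on `n + 1` strands. -/
def braidGen {n : ℕ} (i : Fin n) : BraidGroup n := PresentedGroup.of i

/-- The letter of a braid word: a nonzero integer `a` denotes
`σ_{|a|}^{sign a}`. (Out-of-range letters give `1`.) -/
noncomputable def braidLetter (n : ℕ) (a : ℤ) : BraidGroup n :=
  if h : a.natAbs - 1 < n then
    (braidGen (⟨a.natAbs - 1, h⟩ : Fin n)) ^ (if 0 < a then (1 : ℤ) else -1)
  else 1

/-- The element of the braid group represented by a braid word. -/
noncomputable def braidWord (n : ℕ) (w : List ℤ) : BraidGroup n :=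
  (w.map (braidLetter n)).prod

-- relator images are 1
lemma rel_one {α : Type*} {rels : Set (FreeGroup α)} {r : FreeGroup α} (h : r ∈ rels) :
    PresentedGroup.mk rels r = 1 := by
  exact (QuotientGroup.eq_one_iff r).mpr (Subgroup.subset_normalClosure h)

lemma mk_of {α : Type*} {rels : Set (FreeGroup α)} (x : α) :
    PresentedGroup.mk rels (FreeGroup.of x) = PresentedGroup.of x := rfl

lemma braid_rel {i j : Fin 5} (h : (i : ℕ) + 1 = j) :
    braidGen i * braidGen j * braidGen i = braidGen j * braidGen i * braidGen j := by
  have hr : (FreeGroup.of i * FreeGroup.of j * FreeGroup.of i *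
      (FreeGroup.of j * FreeGroup.of i * FreeGroup.of j)⁻¹) ∈ braidRels 5 :=
    Or.inl ⟨i, j, h, rfl⟩
  have h1 := rel_one hr
  rw [map_mul, map_mul, map_mul, map_inv, map_mul, map_mul, mk_of, mk_of] at h1
  exact mul_inv_eq_one.mp h1

lemma braid_comm {i j : Fin 5} (h : (i : ℕ) + 2 ≤ (j : ℕ)) :
    braidGen i * braidGen j = braidGen j * braidGen i := by
  have hr : (FreeGroup.of i * FreeGroup.of j * (FreeGroup.of j * FreeGroup.of i)⁻¹)
      ∈ braidRels 5 := Or.inr ⟨i, j, h, rfl⟩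
  have h1 := rel_one hr
  rw [map_mul, map_mul, map_inv, map_mul, mk_of, mk_of] at h1
  exact mul_inv_eq_one.mp h1

-- letter lemmas
lemma letter_pos (i : ℕ) (h : i - 1 < 5) (hp : 0 < i) :
    braidLetter 5 (i : ℤ) = braidGen ⟨i - 1, h⟩ := by
  have h1 : (i : ℤ).natAbs = i := Int.natAbs_natCast i
  rw [braidLetter]
  rw [dif_pos (by rw [h1]; exact h)]
  rw [if_pos (by exact_mod_cast hp)]
  simp [h1]

lemma letter_neg (a : ℤ) (ha : a ≠ 0) : braidLetter 5 (-a) = (braidLetter 5 a)⁻¹ := by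
  rw [braidLetter, braidLetter, Int.natAbs_neg]
  by_cases h : a.natAbs - 1 < 5
  · rw [dif_pos h, dif_pos h]
    rcases lt_or_gt_of_ne ha with hn | hp
    · rw [if_pos (by omega), if_neg (by omega)]
      simp
    · rw [if_neg (by omega), if_pos hp]
      simp
  · rw [dif_neg h, dif_neg h]; simp

lemma bw_nil : braidWord 5 [] = 1 := rfl

lemma bw_cons (a : ℤ) (w : List ℤ) :
    braidWord 5 (a :: w) = braidLetter 5 a * braidWord 5 w := by
  simp [braidWord]

lemma bw_app (u v : List ℤ) : braidWord 5 (u ++ v) = braidWord 5 u * braidWord 5 v := by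
  simp [braidWord]

lemma mid (u v : List ℤ) {a b : List ℤ} (h : braidWord 5 a = braidWord 5 b) :
    braidWord 5 (u ++ (a ++ v)) = braidWord 5 (u ++ (b ++ v)) := by
  rw [bw_app, bw_app, bw_app, bw_app, h]

lemma bw_inv : ∀ (w : List ℤ), (∀ a ∈ w, a ≠ 0) →
    braidWord 5 ((w.map (fun a => -a)).reverse) = (braidWord 5 w)⁻¹
  | [], _ => by simp [braidWord]
  | a :: t, h => by
    rw [List.map_cons, List.reverse_cons, bw_app, bw_cons,
      bw_inv t (fun x hx => h x (List.mem_cons_of_mem a hx)),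
      bw_cons, bw_nil, letter_neg a (h a List.mem_cons_self), mul_inv_rev, mul_one]

-- move lemmas
lemma move_cancel (a : ℤ) (h : a ≠ 0) : braidWord 5 [a, -a] = braidWord 5 [] := by
  rw [bw_cons, bw_cons, bw_nil, letter_neg a h, mul_one, mul_inv_cancel]

lemma letter_commute {a b : ℤ} (ha : a ≠ 0) (h : a.natAbs + 2 ≤ b.natAbs) :
    Commute (braidLetter 5 a) (braidLetter 5 b) := by
  by_cases hb : b.natAbs - 1 < 5
  · have haa : a.natAbs - 1 < 5 := by omega
    have hna : a.natAbs ≠ 0 := Int.natAbs_ne_zero.mpr ha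
    rw [braidLetter, braidLetter, dif_pos haa, dif_pos hb]
    have hc : Commute (braidGen (⟨a.natAbs - 1, haa⟩ : Fin 5))
        (braidGen (⟨b.natAbs - 1, hb⟩ : Fin 5)) := braid_comm (by simp; omega)
    exact hc.zpow_zpow _ _
  · have h1 : braidLetter 5 b = 1 := by rw [braidLetter, dif_neg hb]
    rw [h1]
    exact Commute.one_right _

lemma move_comm {a b : ℤ} (ha : a ≠ 0) (h : a.natAbs + 2 ≤ b.natAbs) :
    braidWord 5 [a, b] = braidWord 5 [b, a] := by
  rw [bw_cons, bw_cons, bw_cons, bw_cons, bw_nil, mul_one, mul_one]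
  exact letter_commute ha h

section
variable {G : Type*} [Group G]
lemma sj1 (a b : G) (rel : a*(b*a) = b*(a*b)) :  SemiconjBy (b*a) b a := by
  unfold SemiconjBy; rw [mul_assoc, ← rel]

lemma sj2 (a b : G) (rel : a*(b*a) = b*(a*b)) :  SemiconjBy (b⁻¹*a⁻¹) b a := by
  have h : SemiconjBy (a*b) a b := by unfold SemiconjBy; rw [mul_assoc, rel]
  have := h.inv_symm_left
  rwa [mul_inv_rev] at this

lemma hpp (a b : G) (rel : a*(b*a) = b*(a*b)) :  a*b = b⁻¹*(a*(b*a)) := by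
  have h : b*(a*b) = a*(b*a) := by rw [← mul_assoc]; exact sj1 a b rel
  rw [← h, inv_mul_cancel_left]

lemma hpm (a b : G) (rel : a*(b*a) = b*(a*b)) :  a*b⁻¹ = b⁻¹*(a⁻¹*(b*a)) := by
  have h : b*(a*b⁻¹) = a⁻¹*(b*a) := by rw [← mul_assoc]; exact (sj1 a b rel).inv_right
  rw [← h, inv_mul_cancel_left]

lemma hmp (a b : G) (rel : a*(b*a) = b*(a*b)) :  a⁻¹*b = b*(a*(b⁻¹*a⁻¹)) := by
  have h : b⁻¹*(a⁻¹*b) = a*(b⁻¹*a⁻¹) := by rw [← mul_assoc]; exact sj2 a b rel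
  rw [← h, mul_inv_cancel_left]

lemma hmm2 (a b : G) (rel : a*(b*a) = b*(a*b)) :  a⁻¹*b⁻¹ = b*(a⁻¹*(b⁻¹*a⁻¹)) := by
  have h : b⁻¹*(a⁻¹*b⁻¹) = a⁻¹*(b⁻¹*a⁻¹) := by rw [← mul_assoc]; exact (sj2 a b rel).inv_right
  rw [← h, mul_inv_cancel_left]
end


lemma braid_rel' {i j : Fin 5} (h : (i : ℕ) + 1 = j) :
    braidGen i * (braidGen j * braidGen i) = braidGen j * (braidGen i * braidGen j) := by
  rw [← mul_assoc, braid_rel h, mul_assoc]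
lemma L1 : braidLetter 5 (1 : ℤ) = braidGen (⟨0, by norm_num⟩ : Fin 5) := letter_pos 1 (by norm_num) (by norm_num)
lemma N1 : braidLetter 5 (-1 : ℤ) = (braidGen (⟨0, by norm_num⟩ : Fin 5))⁻¹ := by
  rw [show (-1 : ℤ) = -(1 : ℤ) from rfl, letter_neg 1 (by norm_num), L1]
lemma L2 : braidLetter 5 (2 : ℤ) = braidGen (⟨1, by norm_num⟩ : Fin 5) := letter_pos 2 (by norm_num) (by norm_num)
lemma N2 : braidLetter 5 (-2 : ℤ) = (braidGen (⟨1, by norm_num⟩ : Fin 5))⁻¹ := by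
  rw [show (-2 : ℤ) = -(2 : ℤ) from rfl, letter_neg 2 (by norm_num), L2]
lemma L3 : braidLetter 5 (3 : ℤ) = braidGen (⟨2, by norm_num⟩ : Fin 5) := letter_pos 3 (by norm_num) (by norm_num)
lemma N3 : braidLetter 5 (-3 : ℤ) = (braidGen (⟨2, by norm_num⟩ : Fin 5))⁻¹ := by
  rw [show (-3 : ℤ) = -(3 : ℤ) from rfl, letter_neg 3 (by norm_num), L3]
lemma L4 : braidLetter 5 (4 : ℤ) = braidGen (⟨3, by norm_num⟩ : Fin 5) := letter_pos 4 (by norm_num) (by norm_num)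
lemma N4 : braidLetter 5 (-4 : ℤ) = (braidGen (⟨3, by norm_num⟩ : Fin 5))⁻¹ := by
  rw [show (-4 : ℤ) = -(4 : ℤ) from rfl, letter_neg 4 (by norm_num), L4]
lemma L5 : braidLetter 5 (5 : ℤ) = braidGen (⟨4, by norm_num⟩ : Fin 5) := letter_pos 5 (by norm_num) (by norm_num)
lemma N5 : braidLetter 5 (-5 : ℤ) = (braidGen (⟨4, by norm_num⟩ : Fin 5))⁻¹ := by
  rw [show (-5 : ℤ) = -(5 : ℤ) from rfl, letter_neg 5 (by norm_num), L5]

lemma whpp1 : braidWord 5 [1, 2] = braidWord 5 [-2, 1, 2, 1] := by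
  simp only [bw_cons, bw_nil, mul_one, L1, L2, N1, N2]
  exact hpp _ _ (braid_rel' (by decide))

lemma whpm1 : braidWord 5 [1, -2] = braidWord 5 [-2, -1, 2, 1] := by
  simp only [bw_cons, bw_nil, mul_one, L1, L2, N1, N2]
  exact hpm _ _ (braid_rel' (by decide))

lemma whmp1 : braidWord 5 [-1, 2] = braidWord 5 [2, 1, -2, -1] := by
  simp only [bw_cons, bw_nil, mul_one, L1, L2, N1, N2]
  exact hmp _ _ (braid_rel' (by decide))

lemma whmm1 : braidWord 5 [-1, -2] = braidWord 5 [2, -1, -2, -1] := by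
  simp only [bw_cons, bw_nil, mul_one, L1, L2, N1, N2]
  exact hmm2 _ _ (braid_rel' (by decide))

lemma whpp2 : braidWord 5 [2, 3] = braidWord 5 [-3, 2, 3, 2] := by
  simp only [bw_cons, bw_nil, mul_one, L2, L3, N2, N3]
  exact hpp _ _ (braid_rel' (by decide))

lemma whpm2 : braidWord 5 [2, -3] = braidWord 5 [-3, -2, 3, 2] := by
  simp only [bw_cons, bw_nil, mul_one, L2, L3, N2, N3]
  exact hpm _ _ (braid_rel' (by decide))

lemma whmp2 : braidWord 5 [-2, 3] = braidWord 5 [3, 2, -3, -2] := by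
  simp only [bw_cons, bw_nil, mul_one, L2, L3, N2, N3]
  exact hmp _ _ (braid_rel' (by decide))

lemma whmm2 : braidWord 5 [-2, -3] = braidWord 5 [3, -2, -3, -2] := by
  simp only [bw_cons, bw_nil, mul_one, L2, L3, N2, N3]
  exact hmm2 _ _ (braid_rel' (by decide))

lemma whpp3 : braidWord 5 [3, 4] = braidWord 5 [-4, 3, 4, 3] := by
  simp only [bw_cons, bw_nil, mul_one, L3, L4, N3, N4]
  exact hpp _ _ (braid_rel' (by decide))

lemma whpm3 : braidWord 5 [3, -4] = braidWord 5 [-4, -3, 4, 3] := by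
  simp only [bw_cons, bw_nil, mul_one, L3, L4, N3, N4]
  exact hpm _ _ (braid_rel' (by decide))

lemma whmp3 : braidWord 5 [-3, 4] = braidWord 5 [4, 3, -4, -3] := by
  simp only [bw_cons, bw_nil, mul_one, L3, L4, N3, N4]
  exact hmp _ _ (braid_rel' (by decide))

lemma whmm3 : braidWord 5 [-3, -4] = braidWord 5 [4, -3, -4, -3] := by
  simp only [bw_cons, bw_nil, mul_one, L3, L4, N3, N4]
  exact hmm2 _ _ (braid_rel' (by decide))

lemma whpp4 : braidWord 5 [4, 5] = braidWord 5 [-5, 4, 5, 4] := by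
  simp only [bw_cons, bw_nil, mul_one, L4, L5, N4, N5]
  exact hpp _ _ (braid_rel' (by decide))

lemma whpm4 : braidWord 5 [4, -5] = braidWord 5 [-5, -4, 5, 4] := by
  simp only [bw_cons, bw_nil, mul_one, L4, L5, N4, N5]
  exact hpm _ _ (braid_rel' (by decide))

lemma whmp4 : braidWord 5 [-4, 5] = braidWord 5 [5, 4, -5, -4] := by
  simp only [bw_cons, bw_nil, mul_one, L4, L5, N4, N5]
  exact hmp _ _ (braid_rel' (by decide))

lemma whmm4 : braidWord 5 [-4, -5] = braidWord 5 [5, -4, -5, -4] := by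
  simp only [bw_cons, bw_nil, mul_one, L4, L5, N4, N5]
  exact hmm2 _ _ (braid_rel' (by decide))


def negC (a : ℕ) : ℕ := if a < 8 then a + 8 else a - 8
def magC (a : ℕ) : ℕ := if a < 8 then a else a - 8
def toIntC (a : ℕ) : ℤ := if a < 8 then (a : ℤ) else 8 - (a : ℤ)

def decL : ℕ → ℕ → List ℤ
  | 0, _ => []
  | len+1, n => toIntC (n % 16) :: decL len (n / 16)

def wmove (c p len n : ℕ) : Option (ℕ × ℕ) :=
  if p + 2 ≤ len then
    let pw := 16 ^ p
    let lo := n % pw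
    let x := n / pw
    let a := x % 16
    let y := x / 16
    let b := y % 16
    let z := y / 16
    if a = 0 ∨ a = 8 ∨ b = 0 ∨ b = 8 then none else
    match c with
    | 0 => if b = negC a then some (len - 2, lo + pw * z) else none
    | 1 => if magC a + 2 ≤ magC b ∨ magC b + 2 ≤ magC a then
             some (len, lo + pw * (b + 16 * (a + 16 * z))) else none
    | 2 => if 1 ≤ magC a ∧ magC a ≤ 4 ∧ magC b = magC a + 1 then
             some (len + 2, lo + pw *
               ((if a < 8 then magC a + 9 else magC a + 1) + 16 *
                ((if b < 8 then magC a else magC a + 8) + 16 *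
                 ((if a < 8 then magC a + 1 else magC a + 9) + 16 *
                  (a + 16 * z)))))
           else none
    | _ => none
  else none

def runAll : ℕ × ℕ → List (ℕ × ℕ) → Bool
  | (len, _), [] => len == 0
  | (len, n), (c, p) :: rest =>
    match wmove c p len n with
    | some s => runAll s rest
    | none => false

lemma decL_cons (k d t : ℕ) (hd : d < 16) :
    decL (k + 1) (d + 16 * t) = toIntC d :: decL k t := by
  simp [decL, Nat.add_mul_mod_self_left, Nat.add_mul_div_left _ _ (by norm_num : (0:ℕ) < 16),
    Nat.mod_eq_of_lt hd, Nat.div_eq_of_lt hd]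

lemma decL_split (p q lo hi : ℕ) (h : lo < 16 ^ p) :
    decL (p + q) (lo + 16 ^ p * hi) = decL p lo ++ decL q hi := by
  induction p generalizing lo with
  | zero =>
    have : lo = 0 := by simpa [Nat.lt_one_iff] using h
    subst this; simp [pow_zero, decL]
  | succ p ih =>
    have h16 : (0:ℕ) < 16 := by norm_num
    rw [pow_succ] at h
    have hk : 16 ^ (p + 1) = 16 * 16 ^ p := by rw [pow_succ]; ring
    have hsplit : lo + 16 ^ (p + 1) * hi = (lo % 16) + 16 * (lo / 16 + 16 ^ p * hi) := by
      rw [hk, mul_assoc]; omega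
    have hdiv : lo / 16 < 16 ^ p := by omega
    have e : p + 1 + q = (p + q) + 1 := by omega
    rw [e, hsplit, decL_cons _ _ _ (Nat.mod_lt _ (by norm_num)), ih _ hdiv]
    rfl

lemma toIntC_ne {a : ℕ} (_h16 : a < 16) (h0 : a ≠ 0) (h8 : a ≠ 8) : toIntC a ≠ 0 := by
  unfold toIntC; split_ifs <;> omega

lemma toIntC_negC {a : ℕ} (_h16 : a < 16) (_h0 : a ≠ 0) (_h8 : a ≠ 8) :
    toIntC (negC a) = -toIntC a := by
  unfold toIntC negC; split_ifs <;> push_cast <;> omega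

lemma natAbs_toIntC {a : ℕ} (_h16 : a < 16) : (toIntC a).natAbs = magC a := by
  unfold toIntC magC; split_ifs <;> omega

lemma bw_pre {m1 m2 : List ℤ} (T : List ℤ) (h : braidWord 5 m1 = braidWord 5 m2) :
    braidWord 5 (m1 ++ T) = braidWord 5 (m2 ++ T) := by
  rw [bw_app, bw_app, h]

lemma decomp (p k n : ℕ) :
    decL (p + (k + 2)) n =
      decL p (n % 16 ^ p) ++ (toIntC (n / 16 ^ p % 16) :: toIntC (n / 16 ^ p / 16 % 16) ::
        decL k (n / 16 ^ p / 16 / 16)) := by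
  have hpw : 0 < 16 ^ p := pow_pos (by norm_num) p
  have hlo : n % 16 ^ p < 16 ^ p := Nat.mod_lt _ hpw
  conv_lhs => rw [← Nat.mod_add_div n (16 ^ p)]
  rw [decL_split p (k + 2) _ _ hlo]
  rfl


lemma build2 (p k lo b a z : ℕ) (hlo : lo < 16 ^ p) (hb : b < 16) (ha : a < 16) :
    decL (p + (k + 1 + 1)) (lo + 16 ^ p * (b + 16 * (a + 16 * z))) =
      decL p lo ++ (toIntC b :: toIntC a :: decL k z) := by
  rw [decL_split _ _ _ _ hlo, decL_cons _ _ _ hb, decL_cons _ _ _ ha]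

set_option maxHeartbeats 1000000 in
lemma Hwin (a b : ℕ) (T : List ℤ)
    (ha0 : a ≠ 0) (ha8 : a ≠ 8) (ha16 : a < 16)
    (hb0 : b ≠ 0) (hb8 : b ≠ 8) (hb16 : b < 16)
    (hm1 : 1 ≤ magC a) (hm4 : magC a ≤ 4) (hmb : magC b = magC a + 1) :
    braidWord 5 (toIntC a :: toIntC b :: T) =
    braidWord 5 (toIntC (if a < 8 then magC a + 9 else magC a + 1) ::
      toIntC (if b < 8 then magC a else magC a + 8) ::
      toIntC (if a < 8 then magC a + 1 else magC a + 9) :: toIntC a :: T) := by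
  have hacase : a = 1 ∨ a = 2 ∨ a = 3 ∨ a = 4 ∨ a = 9 ∨ a = 10 ∨ a = 11 ∨ a = 12 := by
    unfold magC at hm1 hm4; split_ifs at hm1 hm4 <;> omega
  have hbcase : b = magC a + 1 ∨ b = magC a + 9 := by
    unfold magC at hmb ⊢; split_ifs at hmb ⊢ <;> omega
  rcases hacase with rfl | rfl | rfl | rfl | rfl | rfl | rfl | rfl <;>
    rcases hbcase with rfl | rfl <;>
    norm_num [toIntC, magC] <;>
    first
      | exact bw_pre _ whpp1 | exact bw_pre _ whpm1
      | exact bw_pre _ whmp1 | exact bw_pre _ whmm1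
      | exact bw_pre _ whpp2 | exact bw_pre _ whpm2
      | exact bw_pre _ whmp2 | exact bw_pre _ whmm2
      | exact bw_pre _ whpp3 | exact bw_pre _ whpm3
      | exact bw_pre _ whmp3 | exact bw_pre _ whmm3
      | exact bw_pre _ whpp4 | exact bw_pre _ whpm4
      | exact bw_pre _ whmp4 | exact bw_pre _ whmm4

set_option maxHeartbeats 2000000 in
lemma wmove_sound {c p len n len' n' : ℕ} (h : wmove c p len n = some (len', n')) :
    braidWord 5 (decL len n) = braidWord 5 (decL len' n') := by
  unfold wmove at h
  by_cases hp : p + 2 ≤ len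
  · rw [if_pos hp] at h
    simp only at h
    by_cases hv : n / 16 ^ p % 16 = 0 ∨ n / 16 ^ p % 16 = 8 ∨
        n / 16 ^ p / 16 % 16 = 0 ∨ n / 16 ^ p / 16 % 16 = 8
    · rw [if_pos hv] at h; cases h
    · rw [if_neg hv] at h
      push_neg at hv
      obtain ⟨ha0, ha8, hb0, hb8⟩ := hv
      have hpw : 0 < 16 ^ p := pow_pos (by norm_num) p
      have hlo : n % 16 ^ p < 16 ^ p := Nat.mod_lt _ hpw
      have ha16 : n / 16 ^ p % 16 < 16 := Nat.mod_lt _ (by norm_num)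
      have hb16 : n / 16 ^ p / 16 % 16 < 16 := Nat.mod_lt _ (by norm_num)
      have hLHS : decL len n = decL p (n % 16 ^ p) ++
          (toIntC (n / 16 ^ p % 16) :: toIntC (n / 16 ^ p / 16 % 16) ::
            decL (len - (p + 2)) (n / 16 ^ p / 16 / 16)) := by
        have hd := decomp p (len - (p + 2)) n
        rw [show p + ((len - (p + 2)) + 2) = len by omega] at hd
        exact hd
      match c with
      | 0 =>
        by_cases hc : n / 16 ^ p / 16 % 16 = negC (n / 16 ^ p % 16)
        · rw [if_pos hc] at h
          injection h with h1; injection h1 with hlen hn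
          subst hlen; subst hn
          have hR : decL (len - 2) (n % 16 ^ p + 16 ^ p * (n / 16 ^ p / 16 / 16)) =
              decL p (n % 16 ^ p) ++ decL (len - (p + 2)) (n / 16 ^ p / 16 / 16) := by
            rw [show len - 2 = p + (len - (p + 2)) by omega]
            exact decL_split _ _ _ _ hlo
          rw [hLHS, hR, bw_app, bw_app]
          congr 1
          rw [hc, bw_cons, bw_cons, toIntC_negC ha16 ha0 ha8,
            letter_neg _ (toIntC_ne ha16 ha0 ha8), mul_inv_cancel_left]
        · rw [if_neg hc] at h; cases h
      | 1 =>
        by_cases hc : magC (n / 16 ^ p % 16) + 2 ≤ magC (n / 16 ^ p / 16 % 16) ∨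
            magC (n / 16 ^ p / 16 % 16) + 2 ≤ magC (n / 16 ^ p % 16)
        · rw [if_pos hc] at h
          injection h with h1; injection h1 with hlen hn
          subst hlen; subst hn
          have hR := build2 p (len - (p + 2)) (n % 16 ^ p) (n / 16 ^ p / 16 % 16)
            (n / 16 ^ p % 16) (n / 16 ^ p / 16 / 16) hlo hb16 ha16
          rw [show p + ((len - (p + 2)) + 1 + 1) = len by omega] at hR
          rw [hLHS, hR, bw_app, bw_app]
          congr 1
          rw [bw_cons, bw_cons, bw_cons, bw_cons, ← mul_assoc, ← mul_assoc]
          congr 1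
          rcases hc with hc | hc
          · exact letter_commute (toIntC_ne ha16 ha0 ha8)
              (by rw [natAbs_toIntC ha16, natAbs_toIntC hb16]; exact hc)
          · exact (letter_commute (toIntC_ne hb16 hb0 hb8)
              (by rw [natAbs_toIntC ha16, natAbs_toIntC hb16]; exact hc)).symm
        · rw [if_neg hc] at h; cases h
      | 2 =>
        by_cases hc : 1 ≤ magC (n / 16 ^ p % 16) ∧ magC (n / 16 ^ p % 16) ≤ 4 ∧
            magC (n / 16 ^ p / 16 % 16) = magC (n / 16 ^ p % 16) + 1
        · rw [if_pos hc] at h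
          injection h with h1; injection h1 with hlen hn
          subst hlen; subst hn
          obtain ⟨hm1, hm4, hmb⟩ := hc
          have hr1 : (if n / 16 ^ p % 16 < 8 then magC (n / 16 ^ p % 16) + 9
              else magC (n / 16 ^ p % 16) + 1) < 16 := by split_ifs <;> omega
          have hr2 : (if n / 16 ^ p / 16 % 16 < 8 then magC (n / 16 ^ p % 16)
              else magC (n / 16 ^ p % 16) + 8) < 16 := by split_ifs <;> omega
          have hr3 : (if n / 16 ^ p % 16 < 8 then magC (n / 16 ^ p % 16) + 1
              else magC (n / 16 ^ p % 16) + 9) < 16 := by split_ifs <;> omega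
          have hR : decL (len + 2) (n % 16 ^ p + 16 ^ p *
              ((if n / 16 ^ p % 16 < 8 then magC (n / 16 ^ p % 16) + 9 else magC (n / 16 ^ p % 16) + 1) + 16 *
               ((if n / 16 ^ p / 16 % 16 < 8 then magC (n / 16 ^ p % 16) else magC (n / 16 ^ p % 16) + 8) + 16 *
                ((if n / 16 ^ p % 16 < 8 then magC (n / 16 ^ p % 16) + 1 else magC (n / 16 ^ p % 16) + 9) + 16 *
                 (n / 16 ^ p % 16 + 16 * (n / 16 ^ p / 16 / 16)))))) =
              decL p (n % 16 ^ p) ++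
                (toIntC (if n / 16 ^ p % 16 < 8 then magC (n / 16 ^ p % 16) + 9 else magC (n / 16 ^ p % 16) + 1) ::
                 toIntC (if n / 16 ^ p / 16 % 16 < 8 then magC (n / 16 ^ p % 16) else magC (n / 16 ^ p % 16) + 8) ::
                 toIntC (if n / 16 ^ p % 16 < 8 then magC (n / 16 ^ p % 16) + 1 else magC (n / 16 ^ p % 16) + 9) ::
                 toIntC (n / 16 ^ p % 16) :: decL (len - (p + 2)) (n / 16 ^ p / 16 / 16)) := by
            rw [show len + 2 = p + ((len - (p + 2)) + 1 + 1 + 1 + 1) by omega,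
              decL_split _ _ _ _ hlo, decL_cons _ _ _ hr1, decL_cons _ _ _ hr2,
              decL_cons _ _ _ hr3, decL_cons _ _ _ ha16]
          rw [hLHS, hR, bw_app, bw_app]
          congr 1
          exact Hwin _ _ _ ha0 ha8 ha16 hb0 hb8 hb16 hm1 hm4 hmb
        · rw [if_neg hc] at h; cases h
  · rw [if_neg hp] at h; cases h


lemma runAll_sound : ∀ (L : List (ℕ × ℕ)) (len n : ℕ), runAll (len, n) L = true →
    braidWord 5 (decL len n) = 1
  | [], len, n, h => by
    simp only [runAll, beq_iff_eq] at h
    subst h; exact bw_nil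
  | (c, q) :: rest, len, n, h => by
    simp only [runAll] at h
    cases hw : wmove c q len n with
    | none => rw [hw] at h; cases h
    | some s =>
      rw [hw] at h
      obtain ⟨len', n'⟩ := s
      exact (wmove_sound hw).trans (runAll_sound rest len' n' h)

def certMoves : List (ℕ × ℕ) := [(2, 49), (1, 52), (0, 53), (2, 51), (0, 54), (1, 46), (1, 47), (1, 48), (1, 49), (1, 50), (1, 51), (1, 52), (2, 53), (1, 56), (0, 57), (1, 45), (1, 46), (1, 47), (2, 48), (1, 51), (1, 52), (1, 53), (0, 54), (2, 44), (1, 47), (2, 48), (0, 51), (0, 43), (2, 44), (0, 47), (1, 55), (0, 56), (1, 54), (1, 55), (1, 56), (0, 57), (0, 53), (1, 50), (2, 51), (0, 54), (0, 53), (1, 41), (1, 42), (1, 43), (1, 44), (1, 45), (1, 46), (1, 47), (2, 48), (1, 51), (1, 52), (1, 53), (0, 54), (1, 40), (2, 41), (1, 44), (1, 45), (1, 46), (2, 47), (1, 50), (0, 51), (1, 39), (0, 40), (1, 41), (2, 42), (1, 45), (0, 46), (1, 36), (1, 37), (1, 38), (2, 39), (1, 42), (1, 43), (1, 44), (1, 45),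 (1, 46), (2, 47), (1, 50), (1, 51), (0, 52), (1, 35), (1, 36), (1, 37), (0, 38), (1, 39), (1, 40), (2, 41), (1, 44), (1, 45), (0, 46), (1, 50), (1, 51), (2, 52), (0, 55), (2, 49), (0, 52), (1, 48), (2, 49), (1, 52), (0, 53), (1, 47), (1, 48), (2, 49), (1, 52), (1, 53), (0, 54), (1, 46), (1, 47), (1, 48), (2, 49), (1, 52), (1, 53), (1, 54), (1, 55), (0, 56), (0, 45), (0, 44), (0, 43), (0, 42), (0, 47), (2, 45), (0, 48), (1, 44), (2, 45), (1, 48), (0, 49), (2, 47), (0, 50), (1, 46), (2, 47), (1, 50), (0, 51), (0, 50), (0, 49), (0, 48), (1, 43), (1, 44), (1, 45), (1, 46), (1, 47), (0, 48), (1, 42), (1, 43), (1, 44), (1, 45), (1, 46), (1, 47), (0, 48), (1, 38), (1, 39), (1, 40), (1, 41), (1, 42), (1, 43), (1, 44), (1, 45), (1, 46), (1, 47), (0, 48), (0, 37), (0, 36), (1, 34), (0, 35), (0, 34), (0, 33), (0, 32), (1, 31), (1, 32), (1, 33), (1, 34), (2, 35), (0, 38), (1, 30), (1, 31), (1, 32),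 (2, 33), (0, 36), (2, 29), (1, 32), (2, 33), (0, 36), (0, 28), (2, 29), (0, 32), (1, 26), (1, 27), (1, 28), (1, 29), (1, 30), (1, 31), (1, 32), (2, 33), (1, 36), (0, 37), (1, 25), (2, 26), (1, 29), (1, 30), (1, 31), (2, 32), (1, 35), (0, 36), (1, 24), (0, 25), (1, 26), (2, 27), (1, 30), (0, 31), (1, 21), (1, 22), (1, 23), (2, 24), (1, 27), (1, 28), (1, 29), (1, 30), (1, 31), (2, 32), (1, 35), (1, 36), (0, 37), (1, 20), (1, 21), (1, 22), (0, 23), (1, 16), (1, 17), (1, 18), (1, 19), (1, 20), (1, 21), (0, 22), (1, 22), (1, 23), (2, 24), (1, 27), (1, 28), (0, 29), (0, 21), (0, 20), (1, 18), (0, 19), (1, 15), (1, 16), (1, 17), (0, 18), (1, 11), (1, 12), (1, 13), (1, 14), (1, 15), (1, 16), (1, 17), (1, 18), (1, 19), (0, 20), (2, 25), (1, 28), (1, 29), (1, 30), (2, 31), (1, 34), (1, 35), (2, 36), (1, 39), (1, 40), (1, 41), (1, 42), (2, 43), (0, 46), (0, 24), (0, 23), (2, 23), (1, 26), (2, 27),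 (0, 30), (0, 22), (0, 21), (2, 21), (0, 24), (1, 20), (1, 21), (1, 22), (2, 23), (1, 26), (0, 27), (0, 19), (0, 18), (1, 17), (0, 18), (1, 10), (1, 11), (2, 12), (1, 15), (1, 16), (1, 17), (1, 18), (0, 19), (1, 9), (2, 10), (0, 13), (2, 8), (0, 11), (0, 7), (1, 19), (2, 20), (0, 23), (2, 18), (0, 21), (1, 17), (2, 18), (1, 21), (0, 22), (0, 16), (2, 14), (0, 17), (0, 13), (2, 12), (1, 15), (0, 16), (1, 11), (2, 12), (1, 15), (1, 16), (1, 17), (1, 18), (1, 19), (0, 20), (0, 10), (0, 9), (1, 16), (1, 17), (1, 18), (2, 19), (0, 22), (2, 15), (2, 18), (2, 21), (0, 24), (0, 14), (0, 13), (0, 13), (2, 11), (0, 14), (0, 14), (2, 12), (0, 15), (1, 10), (1, 11), (2, 12), (1, 15), (1, 16), (0, 17), (1, 9), (1, 10), (1, 11), (2, 12), (1, 15), (1, 16), (1, 17), (1, 18), (0, 19), (0, 8), (2, 7), (0, 10), (0, 6), (0, 5), (0, 26), (0, 25), (1, 23), (0, 24), (1, 14), (1, 15), (1, 16), (1, 17),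 (1, 18), (1, 19), (1, 20), (1, 21), (1, 22), (0, 23), (0, 13), (0, 12), (0, 11), (2, 9), (0, 12), (2, 10), (0, 13), (0, 12), (0, 11), (1, 8), (1, 9), (0, 10), (1, 7), (1, 8), (1, 9), (1, 10), (0, 11), (1, 12), (2, 13), (0, 16), (2, 11), (0, 14), (0, 10), (0, 9), (1, 6), (1, 7), (1, 8), (0, 9), (0, 5), (0, 4), (0, 3), (2, 1), (0, 4), (0, 0), (0, 1), (0, 0)]

def bigN : ℕ := 850403309394301803482489773381221108297008291035320733749507030341655054842080817864427384299698564212904689774914959169195811889241247940730317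

set_option maxRecDepth 20000 in
set_option maxHeartbeats 2000000 in
lemma key : braidWord 5 ([-5, -4, -5, -5, -5, -4, -5, -5, -4, -3, -2, -1, -5, -4, -3, -2, -1, -5, -4, -3, -2, -1, -5, -4, -3, -2, -1, -5, -4, -3, -2, -1, -5, -4, -3, -2, -1, -5, -4, -3, -2, -1, -5, -4, -3, -2, -1] ++ ([-4, -5, 3, 4, 5, -3, -4, -2, -5, 1, 2, 3, 4] ++ ([1, 1, 2, 1, 3, 4, 3, 4, 3, 5, 4, 3, 5, 2, 4, 1, 3, 1, 2, 1, 3, 4, 5, 4, 3, 5, 4, 3, 5, 5, 5, 4, 3, 2, 1, 3, 4, 5, 4, 4, 5, 4, 3, 2, 4, 3, 4] ++ [-4, -3, -2, -1, 5, 2, 4, 3, -5, -4, -3, 5, 4]))) = 1 := by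
  have hlist : decL 120 bigN = [-5, -4, -5, -5, -5, -4, -5, -5, -4, -3, -2, -1, -5, -4, -3, -2, -1, -5, -4, -3, -2, -1, -5, -4, -3, -2, -1, -5, -4, -3, -2, -1, -5, -4, -3, -2, -1, -5, -4, -3, -2, -1, -5, -4, -3, -2, -1] ++ ([-4, -5, 3, 4, 5, -3, -4, -2, -5, 1, 2, 3, 4] ++ ([1, 1, 2, 1, 3, 4, 3, 4, 3, 5, 4, 3, 5, 2, 4, 1, 3, 1, 2, 1, 3, 4, 5, 4, 3, 5, 4, 3, 5, 5, 5, 4, 3, 2, 1, 3, 4, 5, 4, 4, 5, 4, 3, 2, 4, 3, 4] ++ [-4, -3, -2, -1, 5, 2, 4, 3, -5, -4, -3, 5, 4])) := by decide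
  rw [← hlist]
  exact runAll_sound certMoves 120 bigN (by decide)


set_option maxRecDepth 20000 in
theorem stmt14
    (γ α : BraidGroup 5)
    (hγ : γ = braidWord 5
      [1, 1, 2, 1, 3, 4, 3, 4, 3, 5, 4, 3, 5, 2, 4, 1, 3, 1, 2, 1, 3, 4, 5, 4, 3, 5, 4, 3, 5,
      5, 5, 4, 3, 2, 1, 3, 4, 5, 4, 4, 5, 4, 3, 2, 4, 3, 4])
    (hα : α = braidWord 5
      [-4, -3, -2, -1, 5, 2, 4, 3, -5, -4, -3, 5, 4]) :
    α⁻¹ * γ * α = braidWord 5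
      [1, 2, 3, 4, 5, 1, 2, 3, 4, 5, 1, 2, 3, 4, 5, 1, 2, 3, 4, 5, 1, 2, 3, 4, 5, 1, 2, 3, 4,
      5, 1, 2, 3, 4, 5, 1, 2, 3, 4, 5, 5, 4, 5, 5, 5, 4, 5] := by
  have k := key
  rw [bw_app, bw_app, bw_app] at k
  have hRinv : braidWord 5 [-5, -4, -5, -5, -5, -4, -5, -5, -4, -3, -2, -1, -5, -4, -3, -2, -1, -5, -4, -3, -2, -1, -5, -4, -3, -2, -1, -5, -4, -3, -2, -1, -5, -4, -3, -2, -1, -5, -4, -3, -2, -1, -5, -4, -3, -2, -1] = (braidWord 5 [1, 2, 3, 4, 5, 1, 2, 3, 4, 5, 1, 2, 3, 4, 5, 1, 2, 3, 4, 5, 1, 2, 3, 4, 5, 1, 2, 3, 4, 5, 1, 2, 3, 4, 5, 1, 2, 3, 4, 5, 5, 4, 5, 5, 5, 4, 5])⁻¹ := by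
    have he : ([-5, -4, -5, -5, -5, -4, -5, -5, -4, -3, -2, -1, -5, -4, -3, -2, -1, -5, -4, -3, -2, -1, -5, -4, -3, -2, -1, -5, -4, -3, -2, -1, -5, -4, -3, -2, -1, -5, -4, -3, -2, -1, -5, -4, -3, -2, -1] : List ℤ) = (([1, 2, 3, 4, 5, 1, 2, 3, 4, 5, 1, 2, 3, 4, 5, 1, 2, 3, 4, 5, 1, 2, 3, 4, 5, 1, 2, 3, 4, 5, 1, 2, 3, 4, 5, 1, 2, 3, 4, 5, 5, 4, 5, 5, 5, 4, 5] : List ℤ).map (fun a => -a)).reverse := by decide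
    rw [he]; exact bw_inv _ (by decide)
  have hAinv : braidWord 5 [-4, -5, 3, 4, 5, -3, -4, -2, -5, 1, 2, 3, 4] = (braidWord 5 [-4, -3, -2, -1, 5, 2, 4, 3, -5, -4, -3, 5, 4])⁻¹ := by
    have he : ([-4, -5, 3, 4, 5, -3, -4, -2, -5, 1, 2, 3, 4] : List ℤ) = (([-4, -3, -2, -1, 5, 2, 4, 3, -5, -4, -3, 5, 4] : List ℤ).map (fun a => -a)).reverse := by decide
    rw [he]; exact bw_inv _ (by decide)
  rw [hRinv, hAinv] at k
  have h3 := inv_mul_eq_one.mp k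
  rw [hγ, hα, mul_assoc]
  exact h3.symm
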